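/- arXiv:2506.16460 — 3 statements merged into one kernel-verified Lean document; each statement's English description precedes it below -/
import Mathlib

section
/- Strong adversary, single coordinate, IN case: if the challenge batch mean μ_B is the average of k of the actual training samples of a fixed target task τ, then E[(μ̂ − μ̄)·(μ_B − μ̄)] = σ̄²/T + σ²/(N·T). -/
open MeasureTheory ProbabilityTheory Real Set

lemma odd_gauss_int {b : ℝ} : ∫ x : ℝ, x * Real.exp (-b * x ^ 2) = 0 := by
  have h := MeasureTheory.integral_neg_eq_self (fun x : ℝ => x * Real.exp (-b * x ^ 2)) volume
  simp only [neg_sq, neg_mul] at h ⊢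
  rw [integral_neg] at h
  linarith

lemma sq_gauss_int {b : ℝ} (hb : 0 < b) :
    ∫ x : ℝ, x ^ 2 * Real.exp (-b * x ^ 2) = b ^ (-(3:ℝ)/2) * (√π / 2) := by
  have h1 : ∫ x : ℝ, x ^ 2 * Real.exp (-b * x ^ 2)
      = 2 * ∫ x in Ioi (0:ℝ), x ^ 2 * Real.exp (-b * x ^ 2) := by
    rw [← integral_comp_abs (f := fun x => x ^ 2 * Real.exp (-b * x ^ 2))]
    congr 1 with x
    rw [sq_abs]
  have h2 : ∫ x in Ioi (0:ℝ), x ^ 2 * Real.exp (-b * x ^ 2)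
      = b ^ (-(3:ℝ)/2) * (1 / 2) * Real.Gamma ((2 + 1) / 2) := by
    have := integral_rpow_mul_exp_neg_mul_rpow (p := 2) (q := 2) (b := b)
      (by norm_num) (by norm_num) hb
    norm_num at this
    rw [show (-(3:ℝ)/2) = -(3/2) by ring, show ((2:ℝ)+1)/2 = 3/2 by norm_num]
    rw [← this]
    simp only [neg_mul]
  have h3 : Real.Gamma ((2 + 1) / 2) = √π / 2 := by
    have : ((2:ℝ) + 1) / 2 = 1/2 + 1 := by norm_num
    rw [this, Real.Gamma_add_one (by norm_num), Real.Gamma_one_half_eq]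
    ring
  rw [h1, h2, h3]; ring

open scoped NNReal ENNReal

lemma gaussianReal_eq_withDensity_nnreal (m : ℝ) {v : ℝ≥0} (hv : v ≠ 0) :
    gaussianReal m v
      = volume.withDensity (fun x => ((gaussianPDFReal m v x).toNNReal : ℝ≥0∞)) := by
  rw [gaussianReal_of_var_ne_zero m hv]
  rfl

lemma integrable_gaussianReal_iff (m : ℝ) {v : ℝ≥0} (hv : v ≠ 0) {g : ℝ → ℝ} :
    Integrable g (gaussianReal m v)
      ↔ Integrable (fun x => gaussianPDFReal m v x * g x) volume := by
  rw [gaussianReal_eq_withDensity_nnreal m hv,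
    integrable_withDensity_iff_integrable_smul
      (measurable_gaussianPDFReal m v).real_toNNReal]
  refine integrable_congr (Filter.Eventually.of_forall fun x => ?_)
  simp [NNReal.smul_def, Real.coe_toNNReal _ (gaussianPDFReal_nonneg m v x)]

lemma integral_gaussianReal_eq (m : ℝ) {v : ℝ≥0} (hv : v ≠ 0) (g : ℝ → ℝ) :
    ∫ x, g x ∂(gaussianReal m v) = ∫ x, gaussianPDFReal m v x * g x := by
  rw [gaussianReal_eq_withDensity_nnreal m hv,
    integral_withDensity_eq_integral_smul (measurable_gaussianPDFReal m v).real_toNNReal]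
  refine integral_congr_ae (Filter.Eventually.of_forall fun x => ?_)
  simp [NNReal.smul_def, Real.coe_toNNReal _ (gaussianPDFReal_nonneg m v x)]

lemma gaussianPDFReal_eq (m : ℝ) (v : ℝ≥0) (x : ℝ) :
    gaussianPDFReal m v x
      = (√(2*π*(v:ℝ)))⁻¹ * Real.exp (-(2*(v:ℝ))⁻¹ * (x - m)^2) := by
  rw [gaussianPDFReal]
  congr 1
  rw [neg_div, div_eq_inv_mul, neg_mul]

lemma int1 (m : ℝ) {v : ℝ≥0} (hv : v ≠ 0) :
    Integrable (fun x => gaussianPDFReal m v x * (x - m)) volume ∧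
    ∫ x, gaussianPDFReal m v x * (x - m) = 0 := by
  have hvpos : (0:ℝ) < v := by positivity
  have hb : 0 < (2*(v:ℝ))⁻¹ := by positivity
  have hfun : (fun x => gaussianPDFReal m v x * (x - m))
      = (fun y => (√(2*π*(v:ℝ)))⁻¹ * (y * Real.exp (-(2*(v:ℝ))⁻¹ * y^2)))
        ∘ (fun x => x - m) := by
    funext x
    simp only [gaussianPDFReal_eq m, Function.comp_apply]
    ring
  have hint : Integrable
      (fun y => (√(2*π*(v:ℝ)))⁻¹ * (y * Real.exp (-(2*(v:ℝ))⁻¹ * y^2))) volume :=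
    (integrable_mul_exp_neg_mul_sq hb).const_mul _
  constructor
  · rw [hfun]; exact hint.comp_sub_right m
  · rw [hfun]
    have := integral_sub_right_eq_self (μ := volume)
      (fun y => (√(2*π*(v:ℝ)))⁻¹ * (y * Real.exp (-(2*(v:ℝ))⁻¹ * y^2))) m
    rw [show ((fun y => (√(2*π*(v:ℝ)))⁻¹ * (y * Real.exp (-(2*(v:ℝ))⁻¹ * y^2)))
        ∘ (fun x => x - m)) = fun x => (√(2*π*(v:ℝ)))⁻¹
          * ((x - m) * Real.exp (-(2*(v:ℝ))⁻¹ * (x - m)^2)) from rfl, this,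
      integral_const_mul, odd_gauss_int, mul_zero]

lemma int2 (m : ℝ) {v : ℝ≥0} (hv : v ≠ 0) :
    Integrable (fun x => gaussianPDFReal m v x * (x - m)^2) volume ∧
    ∫ x, gaussianPDFReal m v x * (x - m)^2 = v := by
  have hvpos : (0:ℝ) < v := by positivity
  have hb : 0 < (2*(v:ℝ))⁻¹ := by positivity
  have hfun : (fun x => gaussianPDFReal m v x * (x - m)^2)
      = (fun y => (√(2*π*(v:ℝ)))⁻¹ * (y^2 * Real.exp (-(2*(v:ℝ))⁻¹ * y^2)))
        ∘ (fun x => x - m) := by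
    funext x
    simp only [gaussianPDFReal_eq m, Function.comp_apply]
    ring
  have hint : Integrable
      (fun y => (√(2*π*(v:ℝ)))⁻¹ * (y^2 * Real.exp (-(2*(v:ℝ))⁻¹ * y^2))) volume := by
    refine Integrable.const_mul ?_ _
    have := integrable_rpow_mul_exp_neg_mul_sq hb (s := 2) (by norm_num)
    simpa [Real.rpow_natCast] using
      (integrable_rpow_mul_exp_neg_mul_sq hb (s := ((2:ℕ):ℝ)) (by norm_num))
  constructor
  · rw [hfun]; exact hint.comp_sub_right m
  · rw [hfun]
    have := integral_sub_right_eq_self (μ := volume)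
      (fun y => (√(2*π*(v:ℝ)))⁻¹ * (y^2 * Real.exp (-(2*(v:ℝ))⁻¹ * y^2))) m
    rw [show ((fun y => (√(2*π*(v:ℝ)))⁻¹ * (y^2 * Real.exp (-(2*(v:ℝ))⁻¹ * y^2)))
        ∘ (fun x => x - m)) = fun x => (√(2*π*(v:ℝ)))⁻¹
          * ((x - m)^2 * Real.exp (-(2*(v:ℝ))⁻¹ * (x - m)^2)) from rfl, this,
      integral_const_mul, sq_gauss_int hb]
    -- arithmetic
    have h2v : (0:ℝ) < 2*(v:ℝ) := by positivity
    have hs : √(2*(v:ℝ)) ≠ 0 := by positivity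
    have hp : √π ≠ 0 := by positivity
    have hrw : ((2*(v:ℝ))⁻¹) ^ (-(3:ℝ)/2) = (2*(v:ℝ)) * √(2*(v:ℝ)) := by
      rw [show (-(3:ℝ)/2) = -(3/2) by ring, Real.inv_rpow h2v.le, Real.rpow_neg h2v.le,
        inv_inv, show ((3:ℝ)/2) = 1 + 1/2 by norm_num, Real.rpow_add h2v, Real.rpow_one,
        ← Real.sqrt_eq_rpow]
    have hsplit : √(2*π*(v:ℝ)) = √(2*(v:ℝ)) * √π := by
      rw [show 2*π*(v:ℝ) = (2*(v:ℝ)) * π by ring, Real.sqrt_mul h2v.le]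
    rw [hrw, hsplit]
    field_simp

lemma gaussianReal_centered (m : ℝ) {v : ℝ≥0} (hv : v ≠ 0) :
    (Integrable (fun x => x - m) (gaussianReal m v)
      ∧ ∫ x, (x - m) ∂(gaussianReal m v) = 0)
    ∧ (Integrable (fun x => (x - m)^2) (gaussianReal m v)
      ∧ ∫ x, (x - m)^2 ∂(gaussianReal m v) = v) := by
  refine ⟨⟨?_, ?_⟩, ?_, ?_⟩
  · rw [integrable_gaussianReal_iff m hv]; exact (int1 m hv).1
  · rw [integral_gaussianReal_eq m hv]; exact (int1 m hv).2
  · rw [integrable_gaussianReal_iff m hv]; exact (int2 m hv).1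
  · rw [integral_gaussianReal_eq m hv]; exact (int2 m hv).2

lemma transfer {Ω : Type*} [MeasureSpace Ω] {X : Ω → ℝ} (hX : Measurable X) {m : ℝ} {v : ℝ≥0}
    (hlaw : Measure.map X ℙ = gaussianReal m v) (hv : v ≠ 0) :
    (Integrable (fun ω => X ω - m) ℙ ∧ ∫ ω, (X ω - m) ∂ℙ = 0)
    ∧ (Integrable (fun ω => (X ω - m)^2) ℙ ∧ ∫ ω, (X ω - m)^2 ∂ℙ = v) := by
  have h := gaussianReal_centered m hv
  rw [← hlaw] at h
  have hXae : AEMeasurable X ℙ := hX.aemeasurable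
  have hm1 : AEStronglyMeasurable (fun x : ℝ => x - m) (Measure.map X ℙ) :=
    (measurable_id.sub_const m).aestronglyMeasurable
  have hm2 : AEStronglyMeasurable (fun x : ℝ => (x - m)^2) (Measure.map X ℙ) :=
    ((measurable_id.sub_const m).pow_const 2).aestronglyMeasurable
  refine ⟨⟨?_, ?_⟩, ?_, ?_⟩
  · exact (integrable_map_measure hm1 hXae).mp h.1.1
  · rw [← integral_map hXae hm1]; exact h.1.2
  · exact (integrable_map_measure hm2 hXae).mp h.2.1
  · rw [← integral_map hXae hm2]; exact h.2.2

lemma integral_sum_mul_sum {Ω : Type*} [MeasureSpace Ω] {ι : Type*} [Fintype ι]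
    [DecidableEq ι] (G : ι → Ω → ℝ) (a b : ι → ℝ) (V : ι → ℝ)
    (hInt : ∀ s t : ι, Integrable (fun ω => G s ω * G t ω) ℙ)
    (hVal : ∀ s t : ι, ∫ ω, G s ω * G t ω ∂ℙ = if s = t then V s else 0) :
    ∫ ω, (∑ s : ι, a s * G s ω) * (∑ t : ι, b t * G t ω) ∂ℙ
      = ∑ s : ι, a s * b s * V s := by
  have hpt : ∀ ω : Ω, (∑ s : ι, a s * G s ω) * (∑ t : ι, b t * G t ω)
      = ∑ s : ι, ∑ t : ι, (a s * b t) * (G s ω * G t ω) := by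
    intro ω
    rw [Finset.sum_mul_sum]
    exact Finset.sum_congr rfl fun s _ => Finset.sum_congr rfl fun t _ => by ring
  simp_rw [hpt]
  rw [integral_finset_sum _ fun s _ => integrable_finset_sum _
    fun t _ => ((hInt s t).const_mul _)]
  refine Finset.sum_congr rfl fun s _ => ?_
  rw [integral_finset_sum _ fun t _ => ((hInt s t).const_mul _)]
  have : ∀ t : ι, ∫ ω, (a s * b t) * (G s ω * G t ω) ∂ℙ
      = if s = t then a s * b t * V s else 0 := by
    intro t
    rw [MeasureTheory.integral_const_mul, hVal s t]
    by_cases h : s = t <;> simp [h]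
  simp_rw [this]
  simp

/-- Strong adversary, single coordinate, IN case: if the challenge batch mean `μ_B` is the
average of `k` actual training samples of a fixed target task `τ`, then
`E[(μ̂ − μ̄)·(μ_B − μ̄)] = σ̄²/T + σ²/(N·T)`. -/
theorem strong_adversary_in_single_coordinate
    {Ω : Type*} [MeasureSpace Ω] [IsProbabilityMeasure (ℙ : Measure Ω)]
    (T N k : ℕ) (hT : 0 < T) (hN : 0 < N) (hk : 0 < k) (hkN : k ≤ N)
    (μbar σbar σ : ℝ) (hσbar : 0 < σbar) (hσ : 0 < σ)
    (μ : Fin T → Ω → ℝ) (ε : Fin T → Fin N → Ω → ℝ)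
    (hμmeas : ∀ i, Measurable (μ i))
    (hεmeas : ∀ i j, Measurable (ε i j))
    (hμlaw : ∀ i, Measure.map (μ i) ℙ = gaussianReal μbar (σbar ^ 2).toNNReal)
    (hεlaw : ∀ i j, Measure.map (ε i j) ℙ = gaussianReal 0 (σ ^ 2).toNNReal)
    (hindep : iIndepFun
      (Sum.elim μ (fun p : Fin T × Fin N => ε p.1 p.2)) ℙ)
    (τ : Fin T) :
    ∫ ω,
      ((1 / (T : ℝ)) * ∑ i : Fin T, (1 / (N : ℝ)) * ∑ j : Fin N, (μ i ω + ε i j ω) - μbar)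
        * ((1 / (k : ℝ)) * ∑ j : Fin k, (μ τ ω + ε τ (Fin.castLE hkN j) ω) - μbar) ∂ℙ
      = σbar ^ 2 / T + σ ^ 2 / (N * T) := by
  classical
  have hT' : (T:ℝ) ≠ 0 := Nat.cast_ne_zero.mpr hT.ne'
  have hN' : (N:ℝ) ≠ 0 := Nat.cast_ne_zero.mpr hN.ne'
  have hk' : (k:ℝ) ≠ 0 := Nat.cast_ne_zero.mpr hk.ne'
  set ι := Sum (Fin T) (Fin T × Fin N) with hι
  set F : ι → Ω → ℝ := Sum.elim μ (fun p : Fin T × Fin N => ε p.1 p.2) with hF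
  set m : ι → ℝ := Sum.elim (fun _ => μbar) (fun _ => 0) with hm
  set V : ι → ℝ := Sum.elim (fun _ => σbar^2) (fun _ => σ^2) with hV
  set a : ι → ℝ := Sum.elim (fun _ => 1/(T:ℝ)) (fun _ => 1/((T:ℝ)*N)) with hab
  set b : ι → ℝ := Sum.elim (fun i => if i = τ then (1:ℝ) else 0)
    (fun p => if p.1 = τ ∧ (p.2:ℕ) < k then 1/(k:ℝ) else 0) with hbb
  set G : ι → Ω → ℝ := fun s ω => F s ω - m s with hG
  have hFmeas : ∀ s : ι, Measurable (F s) := by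
    rintro (i | p)
    · exact hμmeas i
    · exact hεmeas p.1 p.2
  -- statistics of each centered coordinate
  have hGstat : ∀ s : ι, (Integrable (G s) ℙ ∧ ∫ ω, G s ω ∂ℙ = 0)
      ∧ (Integrable (fun ω => (G s ω)^2) ℙ ∧ ∫ ω, (G s ω)^2 ∂ℙ = V s) := by
    rintro (i | p)
    · have hv : ((σbar^2).toNNReal : ℝ≥0) ≠ 0 := by
        simp only [ne_eq, Real.toNNReal_eq_zero, not_le]
        exact pow_pos hσbar 2
      have h := transfer (hμmeas i) (hμlaw i) hv
      simp only [hG, hF, hm, hV, Sum.elim_inl,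
        Real.coe_toNNReal _ (pow_pos hσbar 2).le] at h ⊢
      exact h
    · have hv : ((σ^2).toNNReal : ℝ≥0) ≠ 0 := by
        simp only [ne_eq, Real.toNNReal_eq_zero, not_le]
        exact pow_pos hσ 2
      have h := transfer (hεmeas p.1 p.2) (hεlaw p.1 p.2) hv
      simp only [hG, hF, hm, hV, Sum.elim_inr, sub_zero,
        Real.coe_toNNReal _ (pow_pos hσ 2).le] at h ⊢
      exact h
  -- independence of distinct coordinates, centered
  have hGindep : ∀ s t : ι, s ≠ t → IndepFun (G s) (G t) ℙ := by
    intro s t hst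
    have h := hindep.indepFun hst
    exact h.comp (measurable_id.sub_const (m s)) (measurable_id.sub_const (m t))
  have hInt : ∀ s t : ι, Integrable (fun ω => G s ω * G t ω) ℙ := by
    intro s t
    by_cases h : s = t
    · subst h
      simpa only [pow_two] using (hGstat s).2.1
    · exact (hGindep s t h).integrable_mul (hGstat s).1.1 (hGstat t).1.1
  have hVal : ∀ s t : ι, ∫ ω, G s ω * G t ω ∂ℙ = if s = t then V s else 0 := by
    intro s t
    by_cases h : s = t
    · subst h
      rw [if_pos rfl]
      simpa only [pow_two] using (hGstat s).2.2
    · rw [if_neg h]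
      have := IndepFun.integral_mul_eq_mul_integral (hGindep s t h)
        ((hFmeas s).sub_const (m s)).aestronglyMeasurable
        ((hFmeas t).sub_const (m t)).aestronglyMeasurable
      rw [show (fun ω => G s ω * G t ω) = G s * G t from rfl, this,
        (hGstat s).1.2, (hGstat t).1.2, mul_zero]
  -- the image of castLE
  have himg : Finset.image (Fin.castLE hkN) Finset.univ
      = Finset.univ.filter (fun j : Fin N => (j:ℕ) < k) := by
    ext j
    simp only [Finset.mem_image, Finset.mem_univ, true_and, Finset.mem_filter]
    constructor
    · rintro ⟨i, rfl⟩
      exact i.isLt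
    · intro hj
      exact ⟨⟨(j:ℕ), hj⟩, by ext; simp⟩
  -- pointwise identification of the two factors
  have hA : ∀ ω, (1 / (T : ℝ)) * ∑ i : Fin T, (1 / (N : ℝ)) * ∑ j : Fin N,
        (μ i ω + ε i j ω) - μbar
      = ∑ s : ι, a s * G s ω := by
    intro ω
    rw [Fintype.sum_sum_type]
    simp only [hab, hG, hF, hm, Sum.elim_inl, Sum.elim_inr]
    rw [Fintype.sum_prod_type]
    have h1 : ∀ i : Fin T, (1 / (N : ℝ)) * ∑ j : Fin N, (μ i ω + ε i j ω)
        = μ i ω + (1/(N:ℝ)) * ∑ j : Fin N, ε i j ω := by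
      intro i
      rw [show ∑ j : Fin N, (μ i ω + ε i j ω)
          = (N:ℝ) * μ i ω + ∑ j : Fin N, ε i j ω from by
        rw [Finset.sum_add_distrib, Finset.sum_const, Finset.card_univ,
          Fintype.card_fin, nsmul_eq_mul]]
      rw [mul_add]
      congr 1
      field_simp
    simp_rw [h1]
    rw [Finset.sum_add_distrib, mul_add]
    have h2 : (1/(T:ℝ)) * ∑ i : Fin T, (1/(N:ℝ)) * ∑ j : Fin N, ε i j ω
        = ∑ i : Fin T, ∑ j : Fin N, (1/((T:ℝ)*N)) * (ε i j ω - 0) := by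
      rw [Finset.mul_sum]
      refine Finset.sum_congr rfl fun i _ => ?_
      rw [Finset.mul_sum, Finset.mul_sum]
      exact Finset.sum_congr rfl fun j _ => by rw [sub_zero]; ring
    rw [h2]
    have h3 : ∑ i : Fin T, (1/(T:ℝ)) * (μ i ω - μbar)
        = (1/(T:ℝ)) * (∑ i : Fin T, μ i ω) - μbar := by
      rw [← Finset.mul_sum, Finset.sum_sub_distrib, Finset.sum_const, Finset.card_univ,
        Fintype.card_fin, nsmul_eq_mul, mul_sub]
      congr 1
      field_simp
    rw [h3]
    ring
  have hB : ∀ ω, (1 / (k : ℝ)) * ∑ j : Fin k, (μ τ ω + ε τ (Fin.castLE hkN j) ω) - μbar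
      = ∑ s : ι, b s * G s ω := by
    intro ω
    rw [Fintype.sum_sum_type]
    simp only [hbb, hG, hF, hm, Sum.elim_inl, Sum.elim_inr]
    rw [Fintype.sum_prod_type]
    have h1 : ∑ i : Fin T, (if i = τ then (1:ℝ) else 0) * (μ i ω - μbar)
        = μ τ ω - μbar := by
      rw [Finset.sum_eq_single τ]
      · simp
      · intro i _ hi; simp [hi]
      · intro h; exact absurd (Finset.mem_univ τ) h
    rw [h1]
    have h2 : ∀ i : Fin T, ∑ j : Fin N,
        (if i = τ ∧ (j:ℕ) < k then 1/(k:ℝ) else 0) * (ε i j ω - 0)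
        = if i = τ then ∑ j : Fin N, (if (j:ℕ) < k then (1/(k:ℝ)) * ε i j ω else 0)
          else 0 := by
      intro i
      by_cases hi : i = τ
      · simp only [hi, true_and, if_pos rfl, sub_zero]
        exact Finset.sum_congr rfl fun j _ => by by_cases hj : (j:ℕ) < k <;> simp [hj]
      · simp [hi]
    simp_rw [h2]
    rw [Finset.sum_ite_eq' Finset.univ τ]
    simp only [Finset.mem_univ, if_pos]
    have h3 : ∑ j : Fin N, (if (j:ℕ) < k then (1/(k:ℝ)) * ε τ j ω else 0)
        = ∑ j : Fin k, (1/(k:ℝ)) * ε τ (Fin.castLE hkN j) ω := by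
      rw [← Finset.sum_filter, ← himg,
        Finset.sum_image (fun x _ y _ h => Fin.castLE_injective hkN h)]
    rw [h3]
    rw [Finset.sum_add_distrib, Finset.sum_const, Finset.card_univ, Fintype.card_fin,
      nsmul_eq_mul, mul_add, Finset.mul_sum]
    have : (1/(k:ℝ)) * ((k:ℝ) * μ τ ω) = μ τ ω := by field_simp
    rw [this]
    ring_nf
  calc ∫ ω, ((1 / (T : ℝ)) * ∑ i : Fin T, (1 / (N : ℝ)) * ∑ j : Fin N,
          (μ i ω + ε i j ω) - μbar)
        * ((1 / (k : ℝ)) * ∑ j : Fin k, (μ τ ω + ε τ (Fin.castLE hkN j) ω) - μbar) ∂ℙ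
      = ∫ ω, (∑ s : ι, a s * G s ω) * (∑ t : ι, b t * G t ω) ∂ℙ := by
        refine integral_congr_ae (Filter.Eventually.of_forall fun ω => ?_)
        dsimp only
        rw [hA ω, hB ω]
    _ = ∑ s : ι, a s * b s * V s := integral_sum_mul_sum G a b V hInt hVal
    _ = σbar ^ 2 / T + σ ^ 2 / (N * T) := by
        rw [Fintype.sum_sum_type]
        simp only [hab, hbb, hV, Sum.elim_inl, Sum.elim_inr]
        have h1 : ∑ i : Fin T, (1/(T:ℝ)) * (if i = τ then (1:ℝ) else 0) * σbar^2
            = σbar^2 / T := by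
          rw [Finset.sum_eq_single τ]
          · simp; ring
          · intro i _ hi; simp [hi]
          · intro h; exact absurd (Finset.mem_univ τ) h
        rw [h1, Fintype.sum_prod_type]
        have h2 : ∀ i : Fin T, ∑ j : Fin N,
            (1/((T:ℝ)*N)) * (if i = τ ∧ (j:ℕ) < k then 1/(k:ℝ) else 0) * σ^2
            = if i = τ then ∑ j : Fin N,
              (if (j:ℕ) < k then (1/((T:ℝ)*N)) * (1/(k:ℝ)) * σ^2 else 0) else 0 := by
          intro i
          by_cases hi : i = τ
          · simp only [hi, true_and, if_pos rfl]
            exact Finset.sum_congr rfl fun j _ => by by_cases hj : (j:ℕ) < k <;> simp [hj]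
          · simp [hi]
        simp_rw [h2]
        rw [Finset.sum_ite_eq' Finset.univ τ]
        simp only [Finset.mem_univ, if_pos]
        rw [← Finset.sum_filter, Finset.sum_const, ← himg,
          Finset.card_image_of_injective _ (Fin.castLE_injective hkN),
          Finset.card_univ, Fintype.card_fin, nsmul_eq_mul]
        field_simp
end

section
/- Weak adversary IN case (Theorem 2 of the paper): the tracing statistic z_IN := Σ_{c ∈ Fin d} (μ̂_c − μ̄)·(μ_{B,c} − μ̄), computed from a challenge batch of k fresh samples drawn from the distribution of a fixed training task τ (samples never used to compute μ̂), satisfies E[z_IN] = (d/T)·σ̄². -/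
open MeasureTheory ProbabilityTheory Real
open scoped NNReal ENNReal

namespace WeakINAux

lemma vne {s : ℝ} (hs : 0 < s) : ((s ^ 2).toNNReal : ℝ≥0) ≠ 0 := by
  simp only [ne_eq, Real.toNNReal_eq_zero, not_le]
  positivity

lemma vcoe {s : ℝ} (_hs : 0 < s) : (((s ^ 2).toNNReal : ℝ≥0) : ℝ) = s ^ 2 :=
  Real.coe_toNNReal _ (sq_nonneg s)

lemma psi_eq {s : ℝ} (hs : 0 < s) (y : ℝ) :
    gaussianPDFReal 0 (s ^ 2).toNNReal y
      = (Real.sqrt (2 * π * s ^ 2))⁻¹ * Real.exp (-(2 * s ^ 2)⁻¹ * y ^ 2) := by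
  rw [gaussianPDFReal, vcoe hs, sub_zero,
    show -y ^ 2 / (2 * s ^ 2) = -(2 * s ^ 2)⁻¹ * y ^ 2 from by ring]

lemma pdf_shift {s : ℝ} (m x : ℝ) :
    gaussianPDFReal m (s ^ 2).toNNReal x = gaussianPDFReal 0 (s ^ 2).toNNReal (x - m) := by
  rw [gaussianPDFReal_sub, zero_add]

lemma gaussianPDF_eq_coe (m : ℝ) (v : ℝ≥0) :
    gaussianPDF m v = fun x => ((Real.toNNReal (gaussianPDFReal m v x) : ℝ≥0) : ℝ≥0∞) := rfl

lemma gauss_integral_eq {s : ℝ} (m : ℝ) (hs : 0 < s) (g : ℝ → ℝ) :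
    ∫ x, g x ∂(gaussianReal m (s ^ 2).toNNReal)
      = ∫ x, gaussianPDFReal m (s ^ 2).toNNReal x * g x := by
  rw [gaussianReal_of_var_ne_zero m (vne hs), gaussianPDF_eq_coe,
    integral_withDensity_eq_integral_smul ((measurable_gaussianPDFReal _ _).real_toNNReal) g]
  refine integral_congr_ae (ae_of_all _ fun x => ?_)
  simp [NNReal.smul_def, Real.coe_toNNReal _ (gaussianPDFReal_nonneg _ _ x)]

lemma gauss_integrable_iff {s : ℝ} (m : ℝ) (hs : 0 < s) {g : ℝ → ℝ} :
    Integrable g (gaussianReal m (s ^ 2).toNNReal)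
      ↔ Integrable (fun x => gaussianPDFReal m (s ^ 2).toNNReal x * g x) volume := by
  rw [gaussianReal_of_var_ne_zero m (vne hs), gaussianPDF_eq_coe,
    integrable_withDensity_iff_integrable_smul ((measurable_gaussianPDFReal _ _).real_toNNReal)]
  constructor <;> intro h <;>
    refine h.congr (ae_of_all _ fun x => ?_) <;>
    simp [NNReal.smul_def, Real.coe_toNNReal _ (gaussianPDFReal_nonneg _ _ x)]

lemma integrable_psi_mul_id {s : ℝ} (hs : 0 < s) :
    Integrable (fun y => gaussianPDFReal 0 (s ^ 2).toNNReal y * y) volume := by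
  have hb : (0 : ℝ) < (2 * s ^ 2)⁻¹ := by positivity
  have h := (integrable_mul_exp_neg_mul_sq hb).const_mul (Real.sqrt (2 * π * s ^ 2))⁻¹
  refine h.congr (ae_of_all _ fun y => ?_)
  simp only [psi_eq hs]
  ring

lemma rpow_two_eq (y : ℝ) : y ^ (2 : ℝ) = y ^ 2 := by
  rw [show (2 : ℝ) = ((2 : ℕ) : ℝ) by norm_num, Real.rpow_natCast]

lemma integrable_psi_mul_sq {s : ℝ} (hs : 0 < s) :
    Integrable (fun y => gaussianPDFReal 0 (s ^ 2).toNNReal y * y ^ 2) volume := by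
  have hb : (0 : ℝ) < (2 * s ^ 2)⁻¹ := by positivity
  have h0 : Integrable (fun y : ℝ => y ^ (2 : ℝ) * Real.exp (-(2 * s ^ 2)⁻¹ * y ^ 2)) volume :=
    integrable_rpow_mul_exp_neg_mul_sq hb (by norm_num)
  have h0' : Integrable (fun y : ℝ => y ^ 2 * Real.exp (-(2 * s ^ 2)⁻¹ * y ^ 2)) volume :=
    h0.congr (ae_of_all _ fun y => by simp only [rpow_two_eq])
  have h := h0'.const_mul (Real.sqrt (2 * π * s ^ 2))⁻¹
  refine h.congr (ae_of_all _ fun y => ?_)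
  simp only [psi_eq hs]
  ring

lemma integral_psi_mul_id {s : ℝ} (hs : 0 < s) :
    ∫ y, gaussianPDFReal 0 (s ^ 2).toNNReal y * y = 0 := by
  set F : ℝ → ℝ := fun y => gaussianPDFReal 0 (s ^ 2).toNNReal y * y with hF
  have hodd : ∀ y, F (-y) = -F y := by
    intro y
    simp only [hF, psi_eq hs, neg_sq]
    ring
  have h1 : ∫ y, F (-y) = ∫ y, F y := integral_neg_eq_self F volume
  have h2 : ∫ y, F (-y) = -∫ y, F y := by
    rw [show (fun y => F (-y)) = fun y => -F y from funext hodd, integral_neg]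
  linarith [h1, h2]

lemma integral_psi_mul_sq {s : ℝ} (hs : 0 < s) :
    ∫ y, gaussianPDFReal 0 (s ^ 2).toNNReal y * y ^ 2 = s ^ 2 := by
  have hb : (0 : ℝ) < (2 * s ^ 2)⁻¹ := by positivity
  have h2s : (0 : ℝ) < 2 * s ^ 2 := by positivity
  have hstep : (fun y => gaussianPDFReal 0 (s ^ 2).toNNReal y * y ^ 2)
      = fun y => (Real.sqrt (2 * π * s ^ 2))⁻¹ *
        (y ^ 2 * Real.exp (-(2 * s ^ 2)⁻¹ * y ^ 2)) := by
    funext y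
    rw [psi_eq hs]
    ring
  rw [hstep, integral_const_mul]
  have habs : ∫ y : ℝ, y ^ 2 * Real.exp (-(2 * s ^ 2)⁻¹ * y ^ 2)
      = 2 * ∫ y in Set.Ioi (0 : ℝ), y ^ 2 * Real.exp (-(2 * s ^ 2)⁻¹ * y ^ 2) := by
    rw [← integral_comp_abs (f := fun y : ℝ => y ^ 2 * Real.exp (-(2 * s ^ 2)⁻¹ * y ^ 2))]
    congr 1
    funext y
    rw [sq_abs]
  have hIoi : ∫ y in Set.Ioi (0 : ℝ), y ^ 2 * Real.exp (-(2 * s ^ 2)⁻¹ * y ^ 2)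
      = ((2 * s ^ 2)⁻¹ : ℝ) ^ (-((2 : ℝ) + 1) / 2) * (1 / 2) * Real.Gamma (((2 : ℝ) + 1) / 2) := by
    have h := integral_rpow_mul_exp_neg_mul_rpow (p := 2) (q := 2) (b := (2 * s ^ 2)⁻¹)
      (by norm_num) (by norm_num) hb
    rw [← h]
    refine setIntegral_congr_fun measurableSet_Ioi fun y _ => ?_
    simp only [rpow_two_eq]
  rw [habs, hIoi]
  have hGamma : Real.Gamma (((2 : ℝ) + 1) / 2) = Real.sqrt π / 2 := by
    have h12 : ((2 : ℝ) + 1) / 2 = 1 / 2 + 1 := by norm_num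
    rw [h12, Real.Gamma_add_one (by norm_num), Real.Gamma_one_half_eq]
    ring
  have hbpow : ((2 * s ^ 2)⁻¹ : ℝ) ^ (-((2 : ℝ) + 1) / 2)
      = (2 * s ^ 2) * Real.sqrt (2 * s ^ 2) := by
    rw [Real.inv_rpow h2s.le, ← Real.rpow_neg h2s.le]
    have he : -(-((2 : ℝ) + 1) / 2) = 1 + 1 / 2 := by norm_num
    rw [he, Real.rpow_add h2s, Real.rpow_one, Real.sqrt_eq_rpow]
  have hsplit : Real.sqrt (2 * π * s ^ 2) = Real.sqrt π * Real.sqrt (2 * s ^ 2) := by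
    rw [← Real.sqrt_mul Real.pi_nonneg]
    congr 1
    ring
  rw [hGamma, hbpow, hsplit]
  have hp : 0 < Real.sqrt π := Real.sqrt_pos.mpr Real.pi_pos
  have hu : 0 < Real.sqrt (2 * s ^ 2) := Real.sqrt_pos.mpr h2s
  have hu2 : Real.sqrt (2 * s ^ 2) ^ 2 = 2 * s ^ 2 := Real.sq_sqrt h2s.le
  field_simp

section RV

variable {Ω : Type*} [MeasureSpace Ω] [IsProbabilityMeasure (ℙ : Measure Ω)]

lemma integrable_pdf_mul_id {s : ℝ} (m : ℝ) (hs : 0 < s) :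
    Integrable (fun x : ℝ => gaussianPDFReal m (s ^ 2).toNNReal x * x) volume := by
  have h1 : Integrable
      (fun x : ℝ => gaussianPDFReal 0 (s ^ 2).toNNReal (x - m) * (x - m)) volume :=
    (integrable_psi_mul_id hs).comp_sub_right m
  have h2 : Integrable
      (fun x : ℝ => m * gaussianPDFReal 0 (s ^ 2).toNNReal (x - m)) volume :=
    ((integrable_gaussianPDFReal 0 _).comp_sub_right m).const_mul m
  refine (h1.add h2).congr (ae_of_all _ fun x => ?_)
  simp only [Pi.add_apply, pdf_shift m]
  ring

lemma gauss_integrable {X : Ω → ℝ} {m s : ℝ} (hs : 0 < s) (hXm : Measurable X)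
    (hX : Measure.map X ℙ = gaussianReal m (s ^ 2).toNNReal) : Integrable X ℙ := by
  have hid : Integrable id (gaussianReal m (s ^ 2).toNNReal) := by
    rw [gauss_integrable_iff m hs]
    exact integrable_pdf_mul_id m hs
  rw [← hX] at hid
  simpa using
    (integrable_map_measure aestronglyMeasurable_id hXm.aemeasurable).mp hid

lemma gauss_integral {X : Ω → ℝ} {m s : ℝ} (hs : 0 < s) (hXm : Measurable X)
    (hX : Measure.map X ℙ = gaussianReal m (s ^ 2).toNNReal) : ∫ ω, X ω ∂ℙ = m := by
  have h0 : ∫ ω, X ω ∂ℙ = ∫ x, id x ∂(Measure.map X ℙ) :=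
    (integral_map hXm.aemeasurable aestronglyMeasurable_id).symm
  rw [h0, hX, gauss_integral_eq m hs]
  have h1 : Integrable
      (fun x : ℝ => gaussianPDFReal 0 (s ^ 2).toNNReal (x - m) * (x - m)) volume :=
    (integrable_psi_mul_id hs).comp_sub_right m
  have h2 : Integrable
      (fun x : ℝ => m * gaussianPDFReal 0 (s ^ 2).toNNReal (x - m)) volume :=
    ((integrable_gaussianPDFReal 0 _).comp_sub_right m).const_mul m
  have hsplit : (fun x : ℝ => gaussianPDFReal m (s ^ 2).toNNReal x * id x)
      = fun x => gaussianPDFReal 0 (s ^ 2).toNNReal (x - m) * (x - m)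
        + m * gaussianPDFReal 0 (s ^ 2).toNNReal (x - m) := by
    funext x
    rw [pdf_shift]
    simp only [id]
    ring
  rw [hsplit, integral_add h1 h2, integral_const_mul,
    integral_sub_right_eq_self (μ := volume)
      (fun y => gaussianPDFReal 0 (s ^ 2).toNNReal y * y) m,
    integral_sub_right_eq_self (μ := volume)
      (fun y => gaussianPDFReal 0 (s ^ 2).toNNReal y) m,
    integral_psi_mul_id hs, integral_gaussianPDFReal_eq_one 0 (vne hs)]
  ring

lemma gauss_integrable_sq {X : Ω → ℝ} {m s : ℝ} (hs : 0 < s) (hXm : Measurable X)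
    (hX : Measure.map X ℙ = gaussianReal m (s ^ 2).toNNReal) :
    Integrable (fun ω => (X ω - m) ^ 2) ℙ := by
  have hg : Integrable (fun x : ℝ => (x - m) ^ 2) (gaussianReal m (s ^ 2).toNNReal) := by
    rw [gauss_integrable_iff m hs]
    refine ((integrable_psi_mul_sq hs).comp_sub_right m).congr (ae_of_all _ fun x => ?_)
    simp only [pdf_shift m]
  rw [← hX] at hg
  exact (integrable_map_measure
    ((measurable_id.sub_const m).pow_const 2).aestronglyMeasurable hXm.aemeasurable).mp hg

lemma gauss_integral_sq {X : Ω → ℝ} {m s : ℝ} (hs : 0 < s) (hXm : Measurable X)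
    (hX : Measure.map X ℙ = gaussianReal m (s ^ 2).toNNReal) :
    ∫ ω, (X ω - m) ^ 2 ∂ℙ = s ^ 2 := by
  have h0 : ∫ ω, (X ω - m) ^ 2 ∂ℙ = ∫ x, (x - m) ^ 2 ∂(Measure.map X ℙ) :=
    (integral_map hXm.aemeasurable
      ((measurable_id.sub_const m).pow_const 2).aestronglyMeasurable).symm
  rw [h0, hX, gauss_integral_eq m hs]
  have hsplit : (fun x : ℝ => gaussianPDFReal m (s ^ 2).toNNReal x * (x - m) ^ 2)
      = fun x => gaussianPDFReal 0 (s ^ 2).toNNReal (x - m) * (x - m) ^ 2 := by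
    funext x
    rw [pdf_shift]
  rw [hsplit,
    integral_sub_right_eq_self (μ := volume)
      (fun y => gaussianPDFReal 0 (s ^ 2).toNNReal y * y ^ 2) m,
    integral_psi_mul_sq hs]

end RV

end WeakINAux

open WeakINAux

/-- Weak adversary IN case (Theorem 2): the tracing statistic
`z_IN := Σ_c (μ̂_c − μ̄)·(μ_{B,c} − μ̄)`, computed from a challenge batch of `k` fresh samples
drawn from the distribution of a fixed training task `τ` (samples never used to compute `μ̂`),
satisfies `E[z_IN] = (d/T)·σ̄²`. -/
theorem weak_adversary_in_expectation
    {Ω : Type*} [MeasureSpace Ω] [IsProbabilityMeasure (ℙ : Measure Ω)]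
    (T N k d : ℕ) (hT : 0 < T) (hN : 0 < N) (hk : 0 < k) (hd : 0 < d) (hkN : k ≤ N)
    (μbar σbar σ : ℝ) (hσbar : 0 < σbar) (hσ : 0 < σ)
    (μ : Fin d → Fin T → Ω → ℝ) (ε : Fin d → Fin T → Fin N → Ω → ℝ)
    (ε' : Fin d → Fin k → Ω → ℝ)
    (hμmeas : ∀ c i, Measurable (μ c i))
    (hεmeas : ∀ c i j, Measurable (ε c i j))
    (hε'meas : ∀ c j, Measurable (ε' c j))
    (hμlaw : ∀ c i, Measure.map (μ c i) ℙ = gaussianReal μbar (σbar ^ 2).toNNReal)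
    (hεlaw : ∀ c i j, Measure.map (ε c i j) ℙ = gaussianReal 0 (σ ^ 2).toNNReal)
    (hε'law : ∀ c j, Measure.map (ε' c j) ℙ = gaussianReal 0 (σ ^ 2).toNNReal)
    (hindep : iIndepFun
      (Sum.elim (fun p : Fin d × Fin T => μ p.1 p.2)
        (Sum.elim (fun p : Fin d × Fin T × Fin N => ε p.1 p.2.1 p.2.2)
          (fun p : Fin d × Fin k => ε' p.1 p.2))) ℙ)
    (τ : Fin T) :
    ∫ ω, ∑ c : Fin d,
      ((1 / (T : ℝ)) * ∑ i : Fin T, (1 / (N : ℝ)) * ∑ j : Fin N, (μ c i ω + ε c i j ω) - μbar)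
        * ((1 / (k : ℝ)) * ∑ j : Fin k, (μ c τ ω + ε' c j ω) - μbar) ∂ℙ
      = (d / T : ℝ) * σbar ^ 2 := by
  classical
  have hT' : (T : ℝ) ≠ 0 := Nat.cast_ne_zero.mpr hT.ne'
  have hN' : (N : ℝ) ≠ 0 := Nat.cast_ne_zero.mpr hN.ne'
  have hk' : (k : ℝ) ≠ 0 := Nat.cast_ne_zero.mpr hk.ne'
  -- basic integrability and expectations
  have hμint : ∀ c i, Integrable (μ c i) ℙ := fun c i =>
    gauss_integrable hσbar (hμmeas c i) (hμlaw c i)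
  have hMint : ∀ c i, Integrable (fun ω => μ c i ω - μbar) ℙ := fun c i =>
    (hμint c i).sub (integrable_const μbar)
  have hMzero : ∀ c i, ∫ ω, (μ c i ω - μbar) ∂ℙ = 0 := by
    intro c i
    rw [integral_sub (hμint c i) (integrable_const μbar),
      gauss_integral hσbar (hμmeas c i) (hμlaw c i), integral_const]
    simp
  have hMsqint : ∀ c, Integrable (fun ω => (μ c τ ω - μbar) ^ 2) ℙ := fun c =>
    gauss_integrable_sq hσbar (hμmeas c τ) (hμlaw c τ)
  have hMsq : ∀ c, ∫ ω, (μ c τ ω - μbar) ^ 2 ∂ℙ = σbar ^ 2 := fun c =>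
    gauss_integral_sq hσbar (hμmeas c τ) (hμlaw c τ)
  have hEint : ∀ c i j, Integrable (ε c i j) ℙ := fun c i j =>
    gauss_integrable hσ (hεmeas c i j) (hεlaw c i j)
  have hEzero : ∀ c i j, ∫ ω, ε c i j ω ∂ℙ = 0 := fun c i j =>
    gauss_integral hσ (hεmeas c i j) (hεlaw c i j)
  have hE'int : ∀ c j, Integrable (ε' c j) ℙ := fun c j =>
    gauss_integrable hσ (hε'meas c j) (hε'law c j)
  have hE'zero : ∀ c j, ∫ ω, ε' c j ω ∂ℙ = 0 := fun c j =>
    gauss_integral hσ (hε'meas c j) (hε'law c j)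
  -- independence of the basic variables
  have hsub : Measurable fun x : ℝ => x - μbar := measurable_id.sub_const μbar
  have hind_MM : ∀ c (i : Fin T), i ≠ τ →
      IndepFun (fun ω => μ c i ω - μbar) (fun ω => μ c τ ω - μbar) ℙ := by
    intro c i hi
    have h := hindep.indepFun (i := Sum.inl (c, i)) (j := Sum.inl (c, τ)) (by simp [hi])
    exact h.comp hsub hsub
  have hind_ME' : ∀ c i j', IndepFun (fun ω => μ c i ω - μbar) (ε' c j') ℙ := by
    intro c i j'
    have h := hindep.indepFun (i := Sum.inl (c, i)) (j := Sum.inr (Sum.inr (c, j'))) (by simp)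
    exact h.comp hsub measurable_id
  have hind_EM : ∀ c i j, IndepFun (ε c i j) (fun ω => μ c τ ω - μbar) ℙ := by
    intro c i j
    have h := hindep.indepFun (i := Sum.inr (Sum.inl (c, i, j))) (j := Sum.inl (c, τ)) (by simp)
    exact h.comp measurable_id hsub
  have hind_EE' : ∀ c i j j', IndepFun (ε c i j) (ε' c j') ℙ := by
    intro c i j j'
    exact hindep.indepFun (i := Sum.inr (Sum.inl (c, i, j))) (j := Sum.inr (Sum.inr (c, j')))
      (by simp)
  -- the four product terms: integrability
  have hP1int : ∀ c (i : Fin T),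
      Integrable (fun ω => (μ c i ω - μbar) * (μ c τ ω - μbar)) ℙ := by
    intro c i
    by_cases hi : i = τ
    · subst hi
      exact (hMsqint c).congr (ae_of_all _ fun ω => by ring)
    · exact (hind_MM c i hi).integrable_mul (hMint c i) (hMint c τ)
  have hP2int : ∀ c (i : Fin T) (j' : Fin k),
      Integrable (fun ω => (μ c i ω - μbar) * ε' c j' ω) ℙ := fun c i j' =>
    (hind_ME' c i j').integrable_mul (hMint c i) (hE'int c j')
  have hP3int : ∀ c i j, Integrable (fun ω => ε c i j ω * (μ c τ ω - μbar)) ℙ := fun c i j =>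
    (hind_EM c i j).integrable_mul (hEint c i j) (hMint c τ)
  have hP4int : ∀ c i j j', Integrable (fun ω => ε c i j ω * ε' c j' ω) ℙ := fun c i j j' =>
    (hind_EE' c i j j').integrable_mul (hEint c i j) (hE'int c j')
  -- the four product terms: expectations
  have hP1val : ∀ c (i : Fin T),
      ∫ ω, (μ c i ω - μbar) * (μ c τ ω - μbar) ∂ℙ = if i = τ then σbar ^ 2 else 0 := by
    intro c i
    by_cases hi : i = τ
    · subst hi
      rw [if_pos rfl, ← hMsq c]
      exact integral_congr_ae (ae_of_all _ fun ω => by ring)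
    · rw [if_neg hi, (hind_MM c i hi).integral_fun_mul_eq_mul_integral (hMint c i).1 (hMint c τ).1, hMzero c i,
        zero_mul]
  have hP2val : ∀ c (i : Fin T) (j' : Fin k),
      ∫ ω, (μ c i ω - μbar) * ε' c j' ω ∂ℙ = 0 := by
    intro c i j'
    rw [(hind_ME' c i j').integral_fun_mul_eq_mul_integral (hMint c i).1 (hE'int c j').1, hMzero c i, zero_mul]
  have hP3val : ∀ c i j, ∫ ω, ε c i j ω * (μ c τ ω - μbar) ∂ℙ = 0 := by
    intro c i j
    rw [(hind_EM c i j).integral_fun_mul_eq_mul_integral (hEint c i j).1 (hMint c τ).1, hEzero c i j, zero_mul]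
  have hP4val : ∀ c i j j', ∫ ω, ε c i j ω * ε' c j' ω ∂ℙ = 0 := by
    intro c i j j'
    rw [(hind_EE' c i j j').integral_fun_mul_eq_mul_integral (hEint c i j).1 (hE'int c j').1, hEzero c i j, zero_mul]
  -- the elementary product terms
  have hgint : ∀ c (i : Fin T) (j : Fin N) (j' : Fin k),
      Integrable (fun ω => ((μ c i ω - μbar) + ε c i j ω)
        * ((μ c τ ω - μbar) + ε' c j' ω)) ℙ := by
    intro c i j j'
    refine (((hP1int c i).add (hP2int c i j')).add
      ((hP3int c i j).add (hP4int c i j j'))).congr (ae_of_all _ fun ω => ?_)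
    simp only [Pi.add_apply]
    ring
  have hgval : ∀ c (i : Fin T) (j : Fin N) (j' : Fin k),
      ∫ ω, ((μ c i ω - μbar) + ε c i j ω) * ((μ c τ ω - μbar) + ε' c j' ω) ∂ℙ
        = if i = τ then σbar ^ 2 else 0 := by
    intro c i j j'
    have hpt : (fun ω => ((μ c i ω - μbar) + ε c i j ω) * ((μ c τ ω - μbar) + ε' c j' ω))
        = fun ω => ((μ c i ω - μbar) * (μ c τ ω - μbar) + (μ c i ω - μbar) * ε' c j' ω)
          + (ε c i j ω * (μ c τ ω - μbar) + ε c i j ω * ε' c j' ω) := by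
      funext ω
      ring
    calc ∫ ω, ((μ c i ω - μbar) + ε c i j ω) * ((μ c τ ω - μbar) + ε' c j' ω) ∂ℙ
        = ∫ ω, (((μ c i ω - μbar) * (μ c τ ω - μbar) + (μ c i ω - μbar) * ε' c j' ω)
          + (ε c i j ω * (μ c τ ω - μbar) + ε c i j ω * ε' c j' ω)) ∂ℙ := by rw [hpt]
      _ = (∫ ω, ((μ c i ω - μbar) * (μ c τ ω - μbar) + (μ c i ω - μbar) * ε' c j' ω) ∂ℙ)
          + ∫ ω, (ε c i j ω * (μ c τ ω - μbar) + ε c i j ω * ε' c j' ω) ∂ℙ :=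
        integral_add ((hP1int c i).add (hP2int c i j')) ((hP3int c i j).add (hP4int c i j j'))
      _ = ((∫ ω, (μ c i ω - μbar) * (μ c τ ω - μbar) ∂ℙ)
            + ∫ ω, (μ c i ω - μbar) * ε' c j' ω ∂ℙ)
          + ((∫ ω, ε c i j ω * (μ c τ ω - μbar) ∂ℙ) + ∫ ω, ε c i j ω * ε' c j' ω ∂ℙ) := by
        rw [integral_add (hP1int c i) (hP2int c i j'),
          integral_add (hP3int c i j) (hP4int c i j j')]
      _ = if i = τ then σbar ^ 2 else 0 := by
        rw [hP1val c i, hP2val c i j', hP3val c i j, hP4val c i j j']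
        ring
  -- pointwise rewriting of the statistic
  have hf1 : ∀ ω c, (1 / (T : ℝ)) * (∑ i : Fin T, (1 / (N : ℝ))
        * ∑ j : Fin N, (μ c i ω + ε c i j ω)) - μbar
      = ((T : ℝ) * (N : ℝ))⁻¹ * ∑ i : Fin T, ∑ j : Fin N, ((μ c i ω - μbar) + ε c i j ω) := by
    intro ω c
    have hsum : ∑ i : Fin T, ∑ j : Fin N, ((μ c i ω - μbar) + ε c i j ω)
        = (∑ i : Fin T, ∑ j : Fin N, (μ c i ω + ε c i j ω)) - (T : ℝ) * ((N : ℝ) * μbar) := by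
      have step : ∀ i : Fin T, ∑ j : Fin N, ((μ c i ω - μbar) + ε c i j ω)
          = (∑ j : Fin N, (μ c i ω + ε c i j ω)) - (N : ℝ) * μbar := by
        intro i
        rw [show (fun j : Fin N => (μ c i ω - μbar) + ε c i j ω)
            = fun j : Fin N => (μ c i ω + ε c i j ω) - μbar from funext fun j => by ring]
        rw [Finset.sum_sub_distrib, Finset.sum_const, Finset.card_univ, Fintype.card_fin,
          nsmul_eq_mul]
      rw [show (fun i : Fin T => ∑ j : Fin N, ((μ c i ω - μbar) + ε c i j ω))
          = fun i : Fin T => (∑ j : Fin N, (μ c i ω + ε c i j ω)) - (N : ℝ) * μbar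
          from funext step]
      rw [Finset.sum_sub_distrib, Finset.sum_const, Finset.card_univ, Fintype.card_fin,
        nsmul_eq_mul]
    rw [hsum, ← Finset.mul_sum]
    field_simp <;> ring
  have hf2 : ∀ ω c, (1 / (k : ℝ)) * (∑ j' : Fin k, (μ c τ ω + ε' c j' ω)) - μbar
      = (k : ℝ)⁻¹ * ∑ j' : Fin k, ((μ c τ ω - μbar) + ε' c j' ω) := by
    intro ω c
    have hsum : ∑ j' : Fin k, ((μ c τ ω - μbar) + ε' c j' ω)
        = (∑ j' : Fin k, (μ c τ ω + ε' c j' ω)) - (k : ℝ) * μbar := by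
      rw [show (fun j' : Fin k => (μ c τ ω - μbar) + ε' c j' ω)
          = fun j' : Fin k => (μ c τ ω + ε' c j' ω) - μbar from funext fun j' => by ring]
      rw [Finset.sum_sub_distrib, Finset.sum_const, Finset.card_univ, Fintype.card_fin,
        nsmul_eq_mul]
    rw [hsum]
    field_simp <;> ring
  have hprod : ∀ (S1 : Fin T → Fin N → ℝ) (S2 : Fin k → ℝ),
      (((T : ℝ) * (N : ℝ))⁻¹ * ∑ i : Fin T, ∑ j : Fin N, S1 i j)
        * ((k : ℝ)⁻¹ * ∑ j' : Fin k, S2 j')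
      = ∑ i : Fin T, ∑ j : Fin N, ∑ j' : Fin k,
          ((T : ℝ) * (N : ℝ) * (k : ℝ))⁻¹ * (S1 i j * S2 j') := by
    intro S1 S2
    simp only [← Finset.mul_sum, ← Finset.sum_mul]
    ring
  have hptw : ∀ ω, ∑ c : Fin d,
      ((1 / (T : ℝ)) * ∑ i : Fin T, (1 / (N : ℝ)) * ∑ j : Fin N, (μ c i ω + ε c i j ω) - μbar)
        * ((1 / (k : ℝ)) * ∑ j : Fin k, (μ c τ ω + ε' c j ω) - μbar)
      = ∑ c : Fin d, ∑ i : Fin T, ∑ j : Fin N, ∑ j' : Fin k,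
          ((T : ℝ) * (N : ℝ) * (k : ℝ))⁻¹
            * (((μ c i ω - μbar) + ε c i j ω) * ((μ c τ ω - μbar) + ε' c j' ω)) := by
    intro ω
    refine Finset.sum_congr rfl fun c _ => ?_
    rw [hf1 ω c, hf2 ω c]
    exact hprod _ _
  -- integrability for swapping integral and sums
  have hint3 : ∀ c (i : Fin T) (j : Fin N) (j' : Fin k),
      Integrable (fun ω => ((T : ℝ) * (N : ℝ) * (k : ℝ))⁻¹
        * (((μ c i ω - μbar) + ε c i j ω) * ((μ c τ ω - μbar) + ε' c j' ω))) ℙ :=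
    fun c i j j' => (hgint c i j j').const_mul _
  have hint2 : ∀ c (i : Fin T) (j : Fin N),
      Integrable (fun ω => ∑ j' : Fin k, ((T : ℝ) * (N : ℝ) * (k : ℝ))⁻¹
        * (((μ c i ω - μbar) + ε c i j ω) * ((μ c τ ω - μbar) + ε' c j' ω))) ℙ :=
    fun c i j => integrable_finset_sum _ fun j' _ => hint3 c i j j'
  have hint1 : ∀ c (i : Fin T),
      Integrable (fun ω => ∑ j : Fin N, ∑ j' : Fin k, ((T : ℝ) * (N : ℝ) * (k : ℝ))⁻¹
        * (((μ c i ω - μbar) + ε c i j ω) * ((μ c τ ω - μbar) + ε' c j' ω))) ℙ :=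
    fun c i => integrable_finset_sum _ fun j _ => hint2 c i j
  have hint0 : ∀ c : Fin d,
      Integrable (fun ω => ∑ i : Fin T, ∑ j : Fin N, ∑ j' : Fin k,
        ((T : ℝ) * (N : ℝ) * (k : ℝ))⁻¹
        * (((μ c i ω - μbar) + ε c i j ω) * ((μ c τ ω - μbar) + ε' c j' ω))) ℙ :=
    fun c => integrable_finset_sum _ fun i _ => hint1 c i
  calc ∫ ω, ∑ c : Fin d,
      ((1 / (T : ℝ)) * ∑ i : Fin T, (1 / (N : ℝ)) * ∑ j : Fin N, (μ c i ω + ε c i j ω) - μbar)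
        * ((1 / (k : ℝ)) * ∑ j : Fin k, (μ c τ ω + ε' c j ω) - μbar) ∂ℙ
      = ∫ ω, ∑ c : Fin d, ∑ i : Fin T, ∑ j : Fin N, ∑ j' : Fin k,
          ((T : ℝ) * (N : ℝ) * (k : ℝ))⁻¹
            * (((μ c i ω - μbar) + ε c i j ω) * ((μ c τ ω - μbar) + ε' c j' ω)) ∂ℙ :=
        integral_congr_ae (ae_of_all _ hptw)
    _ = ∑ c : Fin d, ∑ i : Fin T, ∑ j : Fin N, ∑ j' : Fin k,
          ∫ ω, ((T : ℝ) * (N : ℝ) * (k : ℝ))⁻¹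
            * (((μ c i ω - μbar) + ε c i j ω) * ((μ c τ ω - μbar) + ε' c j' ω)) ∂ℙ := by
        rw [integral_finset_sum _ fun c _ => hint0 c]
        refine Finset.sum_congr rfl fun c _ => ?_
        rw [integral_finset_sum _ fun i _ => hint1 c i]
        refine Finset.sum_congr rfl fun i _ => ?_
        rw [integral_finset_sum _ fun j _ => hint2 c i j]
        refine Finset.sum_congr rfl fun j _ => ?_
        rw [integral_finset_sum _ fun j' _ => hint3 c i j j']
    _ = ∑ c : Fin d, ∑ i : Fin T, ∑ j : Fin N, ∑ j' : Fin k,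
          ((T : ℝ) * (N : ℝ) * (k : ℝ))⁻¹ * (if i = τ then σbar ^ 2 else 0) := by
        refine Finset.sum_congr rfl fun c _ => Finset.sum_congr rfl fun i _ =>
          Finset.sum_congr rfl fun j _ => Finset.sum_congr rfl fun j' _ => ?_
        rw [integral_const_mul, hgval c i j j']
    _ = (d / T : ℝ) * σbar ^ 2 := by
        simp only [mul_ite, mul_zero, Finset.sum_ite_eq', Finset.mem_univ, if_true,
          Finset.sum_const, Finset.card_univ, Fintype.card_fin, nsmul_eq_mul]
        field_simp
end

section
/- OUT case, single-coordinate variance: with the challenge batch mean μ_B formed from k samples of a fresh task independent of all training data, Var((μ̂ − μ̄)·(μ_B − μ̄)) = (1/T)·[σ̄⁴ + σ⁴/(k·N) + ((k+N)/(k·N))·σ̄²·σ²]. -/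
open MeasureTheory ProbabilityTheory Real Set
open scoped NNReal ENNReal

namespace OutAux

variable {v : ℝ≥0}

lemma integral_id_mul_exp_neg_mul_sq {b : ℝ} (hb : 0 < b) :
    ∫ x : ℝ, x * rexp (-b * x ^ 2) = 0 := by
  have h := MeasureTheory.integral_neg_eq_self (fun x : ℝ => x * rexp (-b * x ^ 2))
      (volume : Measure ℝ)
  simp only [neg_sq, neg_mul, integral_neg] at h
  simp only [neg_mul]
  linarith

lemma integrable_sq_mul_exp_neg_mul_sq {b : ℝ} (hb : 0 < b) :
    Integrable fun x : ℝ => x ^ 2 * rexp (-b * x ^ 2) := by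
  have := integrable_rpow_mul_exp_neg_mul_sq hb (s := 2) (by norm_num)
  simpa [Real.rpow_two] using this

lemma integral_sq_mul_exp_neg_mul_sq {b : ℝ} (hb : 0 < b) :
    ∫ x : ℝ, x ^ 2 * rexp (-b * x ^ 2) = √π / (2 * b ^ (3/2 : ℝ)) := by
  have hint := integrable_sq_mul_exp_neg_mul_sq hb
  have hsplit := intervalIntegral.integral_Iic_add_Ioi (b := (0:ℝ)) hint.integrableOn hint.integrableOn
  have hIic : (∫ x in Iic (0:ℝ), x ^ 2 * rexp (-b * x ^ 2))
      = ∫ x in Ioi (0:ℝ), x ^ 2 * rexp (-b * x ^ 2) := by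
    have h1 : (∫ x in Iic (0:ℝ), x ^ 2 * rexp (-b * x ^ 2))
        = ∫ x in Iic (0:ℝ), (-x) ^ 2 * rexp (-b * (-x) ^ 2) := by simp
    rw [h1, integral_comp_neg_Iic (0:ℝ) (fun x => x ^ 2 * rexp (-b * x ^ 2))]
    simp [integral_Ici_eq_integral_Ioi]
  have hIoi : (∫ x in Ioi (0:ℝ), x ^ 2 * rexp (-b * x ^ 2))
      = b ^ (-(3:ℝ)/2) * (1/2) * Real.Gamma (3/2) := by
    have h := integral_rpow_mul_exp_neg_mul_rpow (p := 2) (q := 2) (by norm_num) (by norm_num) hb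
    have : ∀ x : ℝ, x ∈ Ioi (0:ℝ) → x ^ (2:ℝ) * rexp (-b * x ^ (2:ℝ)) = x ^ 2 * rexp (-b * x ^ 2) := by
      intro x hx
      rw [Real.rpow_two]
    rw [setIntegral_congr_fun measurableSet_Ioi this] at h
    rw [h]
    norm_num
  have hGamma : Real.Gamma (3/2) = √π / 2 := by
    have : (3/2 : ℝ) = 1/2 + 1 := by norm_num
    rw [this, Real.Gamma_add_one (by norm_num), Real.Gamma_one_half_eq]
    ring
  have : (∫ x : ℝ, x ^ 2 * rexp (-b * x ^ 2))
      = 2 * (b ^ (-(3:ℝ)/2) * (1/2) * Real.Gamma (3/2)) := by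
    rw [← hsplit, hIic, hIoi]; ring
  have hneg : (-3 : ℝ)/2 = -(3/2 : ℝ) := by norm_num
  rw [this, hGamma, hneg, Real.rpow_neg hb.le]
  have h32 : (0:ℝ) < b ^ (3/2 : ℝ) := Real.rpow_pos_of_pos hb _
  field_simp


lemma coe_v_pos (hv : v ≠ 0) : (0:ℝ) < (v:ℝ) := by
  exact_mod_cast lt_of_le_of_ne zero_le (Ne.symm hv)

lemma hb_pos (hv : v ≠ 0) : (0:ℝ) < (2 * (v:ℝ))⁻¹ := by
  have := coe_v_pos (v := v) hv; positivity

lemma pdf0_eq :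
    gaussianPDFReal 0 v = fun x => (√(2 * π * (v:ℝ)))⁻¹ * rexp (-((2 * (v:ℝ))⁻¹) * x ^ 2) := by
  funext x
  rw [gaussianPDFReal]
  congr 1
  rw [sub_zero]
  congr 1
  field_simp

lemma integrable_mul_pdf0 (hv : v ≠ 0) :
    Integrable fun x : ℝ => x * gaussianPDFReal 0 v x := by
  rw [pdf0_eq]
  have : (fun x : ℝ => x * ((√(2 * π * (v:ℝ)))⁻¹ * rexp (-((2 * (v:ℝ))⁻¹) * x ^ 2)))
      = fun x : ℝ => (√(2 * π * (v:ℝ)))⁻¹ * (x * rexp (-((2 * (v:ℝ))⁻¹) * x ^ 2)) := by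
    funext x; ring
  rw [this]
  exact (integrable_mul_exp_neg_mul_sq (hb_pos hv)).const_mul _

lemma integrable_sq_pdf0 (hv : v ≠ 0) :
    Integrable fun x : ℝ => x ^ 2 * gaussianPDFReal 0 v x := by
  rw [pdf0_eq]
  have : (fun x : ℝ => x ^ 2 * ((√(2 * π * (v:ℝ)))⁻¹ * rexp (-((2 * (v:ℝ))⁻¹) * x ^ 2)))
      = fun x : ℝ => (√(2 * π * (v:ℝ)))⁻¹ * (x ^ 2 * rexp (-((2 * (v:ℝ))⁻¹) * x ^ 2)) := by
    funext x; ring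
  rw [this]
  exact (integrable_sq_mul_exp_neg_mul_sq (hb_pos hv)).const_mul _

lemma integral_mul_pdf0 (hv : v ≠ 0) :
    ∫ x : ℝ, x * gaussianPDFReal 0 v x = 0 := by
  rw [pdf0_eq]
  have : (fun x : ℝ => x * ((√(2 * π * (v:ℝ)))⁻¹ * rexp (-((2 * (v:ℝ))⁻¹) * x ^ 2)))
      = fun x : ℝ => (√(2 * π * (v:ℝ)))⁻¹ * (x * rexp (-((2 * (v:ℝ))⁻¹) * x ^ 2)) := by
    funext x; ring
  rw [this, integral_const_mul, integral_id_mul_exp_neg_mul_sq (hb_pos hv), mul_zero]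

lemma integral_sq_pdf0 (hv : v ≠ 0) :
    ∫ x : ℝ, x ^ 2 * gaussianPDFReal 0 v x = (v:ℝ) := by
  have hvpos := coe_v_pos (v := v) hv
  have h2v : (0:ℝ) < 2 * (v:ℝ) := by positivity
  rw [pdf0_eq]
  have hsw : (fun x : ℝ => x ^ 2 * ((√(2 * π * (v:ℝ)))⁻¹ * rexp (-((2 * (v:ℝ))⁻¹) * x ^ 2)))
      = fun x : ℝ => (√(2 * π * (v:ℝ)))⁻¹ * (x ^ 2 * rexp (-((2 * (v:ℝ))⁻¹) * x ^ 2)) := by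
    funext x; ring
  rw [hsw, integral_const_mul, integral_sq_mul_exp_neg_mul_sq (hb_pos hv)]
  rw [Real.inv_rpow h2v.le]
  have hsqrt : √(2 * π * (v:ℝ)) = (2 * (v:ℝ)) ^ (1/2 : ℝ) * √π := by
    rw [show 2 * π * (v:ℝ) = (2 * (v:ℝ)) * π by ring, Real.sqrt_mul h2v.le,
      Real.sqrt_eq_rpow]
  rw [hsqrt]
  have h12 : (0:ℝ) < (2 * (v:ℝ)) ^ (1/2 : ℝ) := Real.rpow_pos_of_pos h2v _
  have h32 : (0:ℝ) < (2 * (v:ℝ)) ^ (3/2 : ℝ) := Real.rpow_pos_of_pos h2v _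
  have hπ : (0:ℝ) < √π := Real.sqrt_pos.mpr Real.pi_pos
  have key : (2 * (v:ℝ)) ^ (3/2 : ℝ) = 2 * (v:ℝ) * (2 * (v:ℝ)) ^ (1/2 : ℝ) := by
    rw [show (3/2:ℝ) = 1 + 1/2 by norm_num, Real.rpow_add h2v, Real.rpow_one]
  rw [key]
  field_simp


lemma gaussianReal_eq_withDensity (m : ℝ) (hv : v ≠ 0) :
    gaussianReal m v
      = volume.withDensity (fun x => ((gaussianPDFReal m v x).toNNReal : ℝ≥0∞)) := by
  rw [gaussianReal_of_var_ne_zero m hv]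
  rfl

lemma integral_fun_gaussianReal (m : ℝ) (hv : v ≠ 0) (f : ℝ → ℝ) :
    ∫ x, f x ∂(gaussianReal m v) = ∫ x, f x * gaussianPDFReal m v x := by
  rw [gaussianReal_eq_withDensity m hv,
    integral_withDensity_eq_integral_smul
      ((measurable_gaussianPDFReal m v).real_toNNReal) f]
  congr 1
  funext x
  rw [NNReal.smul_def, smul_eq_mul, Real.coe_toNNReal _ (gaussianPDFReal_nonneg m v x), mul_comm]

lemma integrable_fun_gaussianReal_iff (m : ℝ) (hv : v ≠ 0) (f : ℝ → ℝ) :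
    Integrable f (gaussianReal m v) ↔
      Integrable (fun x => f x * gaussianPDFReal m v x) volume := by
  rw [gaussianReal_eq_withDensity m hv,
    integrable_withDensity_iff_integrable_smul
      ((measurable_gaussianPDFReal m v).real_toNNReal)]
  constructor <;> intro h <;> apply h.congr <;> filter_upwards with x <;>
    rw [NNReal.smul_def, smul_eq_mul, Real.coe_toNNReal _ (gaussianPDFReal_nonneg m v x), mul_comm]

lemma integral_mul_pdf_shift (m : ℝ) (f : ℝ → ℝ) :
    ∫ x, f x * gaussianPDFReal m v x = ∫ x, f (x + m) * gaussianPDFReal 0 v x := by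
  rw [← integral_add_right_eq_self (fun x => f x * gaussianPDFReal m v x) m]
  congr 1
  funext x
  rw [gaussianPDFReal_add x m, sub_self]

lemma integrable_sq_pdf_m (m : ℝ) (hv : v ≠ 0) :
    Integrable (fun x => x ^ 2 * gaussianPDFReal m v x) volume := by
  have h : Integrable (fun y : ℝ => (y + m) ^ 2 * gaussianPDFReal 0 v y) volume := by
    have h1 := integrable_sq_pdf0 hv
    have h2 := (integrable_mul_pdf0 hv).const_mul (2 * m)
    have h3 := (integrable_gaussianPDFReal 0 v).const_mul (m ^ 2)
    have h4 := (h1.add h2).add h3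
    apply h4.congr
    filter_upwards with y
    simp only [Pi.add_apply]
    ring
  have h5 := h.comp_sub_right m
  apply h5.congr
  filter_upwards with x
  rw [gaussianPDFReal_sub x m, zero_add, sub_add_cancel]

lemma memLp_two_id_gaussianReal (m : ℝ) (hv : v ≠ 0) :
    MemLp (id : ℝ → ℝ) 2 (gaussianReal m v) := by
  rw [memLp_two_iff_integrable_sq aestronglyMeasurable_id]
  have : (fun x : ℝ => (id x) ^ 2) = fun x : ℝ => x ^ 2 := rfl
  rw [integrable_fun_gaussianReal_iff m hv]
  exact integrable_sq_pdf_m m hv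

lemma integral_id_gaussianReal (m : ℝ) (hv : v ≠ 0) :
    ∫ x, x ∂(gaussianReal m v) = m := by
  rw [integral_fun_gaussianReal m hv, integral_mul_pdf_shift m]
  have : (fun x : ℝ => (x + m) * gaussianPDFReal 0 v x)
      = fun x => x * gaussianPDFReal 0 v x + m * gaussianPDFReal 0 v x := by
    funext x; ring
  rw [this, integral_add (integrable_mul_pdf0 hv)
    ((integrable_gaussianPDFReal 0 v).const_mul m), integral_mul_pdf0 hv, integral_const_mul,
    integral_gaussianPDFReal_eq_one 0 hv]
  ring

lemma integral_sq_gaussianReal (m : ℝ) (hv : v ≠ 0) :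
    ∫ x, x ^ 2 ∂(gaussianReal m v) = m ^ 2 + (v:ℝ) := by
  rw [integral_fun_gaussianReal m hv (fun x => x ^ 2), integral_mul_pdf_shift m]
  have : (fun x : ℝ => (x + m) ^ 2 * gaussianPDFReal 0 v x)
      = fun x => x ^ 2 * gaussianPDFReal 0 v x
          + (2 * m) * (x * gaussianPDFReal 0 v x) + m ^ 2 * gaussianPDFReal 0 v x := by
    funext x; ring
  have hI12 : Integrable
      (fun x : ℝ => x ^ 2 * gaussianPDFReal 0 v x + 2 * m * (x * gaussianPDFReal 0 v x))
      volume :=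
    (integrable_sq_pdf0 hv).add ((integrable_mul_pdf0 hv).const_mul (2 * m))
  rw [this, integral_add hI12 ((integrable_gaussianPDFReal 0 v).const_mul (m ^ 2)),
    integral_add (integrable_sq_pdf0 hv) ((integrable_mul_pdf0 hv).const_mul (2 * m)),
    integral_sq_pdf0 hv, integral_const_mul, integral_const_mul, integral_mul_pdf0 hv,
    integral_gaussianPDFReal_eq_one 0 hv]
  ring

section RV

variable {Ω : Type*} [MeasureSpace Ω] {X : Ω → ℝ} {m : ℝ}

lemma rv_memLp (hX : Measurable X) (hv : v ≠ 0)
    (hlaw : Measure.map X ℙ = gaussianReal m v) : MemLp X 2 ℙ := by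
  have h := memLp_two_id_gaussianReal (v := v) m hv
  rw [← hlaw] at h
  have h2 := (memLp_map_measure_iff aestronglyMeasurable_id hX.aemeasurable).mp h
  simpa [Function.comp] using h2

lemma rv_integral (hX : Measurable X) (hv : v ≠ 0)
    (hlaw : Measure.map X ℙ = gaussianReal m v) : ∫ ω, X ω ∂(ℙ : Measure Ω) = m := by
  have h : ∫ x, x ∂(Measure.map X ℙ) = m := by
    rw [hlaw]; exact integral_id_gaussianReal m hv
  have h2 : (∫ x, x ∂(Measure.map X ℙ)) = ∫ ω, X ω ∂(ℙ : Measure Ω) :=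
    integral_map hX.aemeasurable measurable_id.aestronglyMeasurable
  rw [← h2]; exact h

lemma rv_integral_sq (hX : Measurable X) (hv : v ≠ 0)
    (hlaw : Measure.map X ℙ = gaussianReal m v) :
    ∫ ω, (X ω) ^ 2 ∂(ℙ : Measure Ω) = m ^ 2 + (v:ℝ) := by
  have h : ∫ x, x ^ 2 ∂(Measure.map X ℙ) = m ^ 2 + (v:ℝ) := by
    rw [hlaw]; exact integral_sq_gaussianReal m hv
  have h2 : (∫ x, x ^ 2 ∂(Measure.map X ℙ)) = ∫ ω, (X ω) ^ 2 ∂(ℙ : Measure Ω) :=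
    integral_map hX.aemeasurable (measurable_id.pow_const 2).aestronglyMeasurable
  rw [← h2]; exact h

lemma rv_variance [IsProbabilityMeasure (ℙ : Measure Ω)] (hX : Measurable X) (hv : v ≠ 0)
    (hlaw : Measure.map X ℙ = gaussianReal m v) : variance X ℙ = (v:ℝ) := by
  rw [variance_eq_sub (rv_memLp hX hv hlaw)]
  have h1 : (ℙ : Measure Ω)[X ^ 2] = m ^ 2 + (v:ℝ) := by
    have := rv_integral_sq hX hv hlaw
    simpa [Pi.pow_apply] using this
  rw [h1, rv_integral hX hv hlaw]
  ring

end RV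

lemma variance_fun_sub_const {Ω : Type*} [MeasureSpace Ω] [IsProbabilityMeasure (ℙ : Measure Ω)]
    {X : Ω → ℝ} (hX : MemLp X 2 ℙ) (c : ℝ) :
    variance (fun ω => X ω - c) ℙ = variance X ℙ := by
  have hXc : MemLp (fun ω => X ω - c) 2 ℙ := hX.sub (memLp_const c)
  have hXi : Integrable X ℙ := hX.integrable one_le_two
  have hX2 : Integrable (fun ω => X ω ^ 2) ℙ := hX.integrable_sq
  rw [variance_eq_sub hXc, variance_eq_sub hX]
  simp only [Pi.pow_apply]
  have h1 : (fun ω => (X ω - c) ^ 2) = fun ω => X ω ^ 2 - 2 * c * X ω + c ^ 2 := by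
    funext ω; ring
  have h2 : ∫ ω, (X ω - c) ^ 2 ∂ℙ = ∫ ω, X ω ^ 2 ∂ℙ - 2 * c * ∫ ω, X ω ∂ℙ + c ^ 2 := by
    have hsub : Integrable (fun ω => X ω ^ 2 - 2 * c * X ω) ℙ :=
      hX2.sub (hXi.const_mul (2 * c))
    rw [h1, integral_add hsub (integrable_const _),
      integral_sub hX2 (hXi.const_mul (2 * c)), integral_const_mul, integral_const]
    simp
  have h3 : ∫ ω, (X ω - c) ∂ℙ = (∫ ω, X ω ∂ℙ) - c := by
    rw [integral_sub hXi (integrable_const _), integral_const]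
    simp
  rw [h2, h3]
  ring

end OutAux

set_option maxHeartbeats 2000000 in
/-- OUT case, single-coordinate variance: with the challenge batch mean `μ_B` formed from `k`
samples of a fresh task independent of all training data,
`Var((μ̂ − μ̄)·(μ_B − μ̄)) = (1/T)·[σ̄⁴ + σ⁴/(k·N) + ((k+N)/(k·N))·σ̄²·σ²]`. -/
theorem out_case_single_coordinate_variance
    {Ω : Type*} [MeasureSpace Ω] [IsProbabilityMeasure (ℙ : Measure Ω)]
    (T N k : ℕ) (hT : 0 < T) (hN : 0 < N) (hk : 0 < k) (hkN : k ≤ N)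
    (μbar σbar σ : ℝ) (hσbar : 0 < σbar) (hσ : 0 < σ)
    (μ : Fin T → Ω → ℝ) (ε : Fin T → Fin N → Ω → ℝ)
    (μ' : Ω → ℝ) (ε' : Fin k → Ω → ℝ)
    (hμmeas : ∀ i, Measurable (μ i))
    (hεmeas : ∀ i j, Measurable (ε i j))
    (hμ'meas : Measurable μ')
    (hε'meas : ∀ j, Measurable (ε' j))
    (hμlaw : ∀ i, Measure.map (μ i) ℙ = gaussianReal μbar (σbar ^ 2).toNNReal)
    (hεlaw : ∀ i j, Measure.map (ε i j) ℙ = gaussianReal 0 (σ ^ 2).toNNReal)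
    (hμ'law : Measure.map μ' ℙ = gaussianReal μbar (σbar ^ 2).toNNReal)
    (hε'law : ∀ j, Measure.map (ε' j) ℙ = gaussianReal 0 (σ ^ 2).toNNReal)
    (hindep : iIndepFun
      (Sum.elim μ (Sum.elim (fun p : Fin T × Fin N => ε p.1 p.2)
        (Sum.elim (fun _ : Unit => μ') ε'))) ℙ) :
    variance
      (fun ω =>
        ((1 / (T : ℝ)) * ∑ i : Fin T, (1 / (N : ℝ)) * ∑ j : Fin N, (μ i ω + ε i j ω) - μbar)
          * ((1 / (k : ℝ)) * ∑ j : Fin k, (μ' ω + ε' j ω) - μbar)) ℙ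
      = (1 / (T : ℝ)) *
          (σbar ^ 4 + σ ^ 4 / (k * N) + ((k + N : ℝ) / (k * N)) * (σbar ^ 2 * σ ^ 2)) := by
  classical
  have hT0 : ((T : ℝ)) ≠ 0 := Nat.cast_ne_zero.mpr hT.ne'
  have hN0 : ((N : ℝ)) ≠ 0 := Nat.cast_ne_zero.mpr hN.ne'
  have hk0 : ((k : ℝ)) ≠ 0 := Nat.cast_ne_zero.mpr hk.ne'
  have hvb : (σbar ^ 2).toNNReal ≠ 0 := by
    simp only [ne_eq, Real.toNNReal_eq_zero, not_le]
    positivity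
  have hve : (σ ^ 2).toNNReal ≠ 0 := by
    simp only [ne_eq, Real.toNNReal_eq_zero, not_le]
    positivity
  have hvbcoe : (((σbar ^ 2).toNNReal : ℝ≥0) : ℝ) = σbar ^ 2 :=
    Real.coe_toNNReal _ (sq_nonneg σbar)
  have hvecoe : (((σ ^ 2).toNNReal : ℝ≥0) : ℝ) = σ ^ 2 :=
    Real.coe_toNNReal _ (sq_nonneg σ)
  -- the index type and family
  set F : (Fin T ⊕ ((Fin T × Fin N) ⊕ (Unit ⊕ Fin k))) → Ω → ℝ :=
    Sum.elim μ (Sum.elim (fun p : Fin T × Fin N => ε p.1 p.2)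
      (Sum.elim (fun _ : Unit => μ') ε')) with hFdef
  have hFmeas : ∀ i, Measurable (F i) := by
    rintro (i | (p | (u | j)))
    · exact hμmeas i
    · exact hεmeas p.1 p.2
    · exact hμ'meas
    · exact hε'meas j
  -- mean, variance and coefficient functions
  set M : (Fin T ⊕ ((Fin T × Fin N) ⊕ (Unit ⊕ Fin k))) → ℝ :=
    Sum.elim (fun _ => μbar) (Sum.elim (fun _ => (0:ℝ))
      (Sum.elim (fun _ => μbar) (fun _ => (0:ℝ)))) with hMdef
  set V : (Fin T ⊕ ((Fin T × Fin N) ⊕ (Unit ⊕ Fin k))) → ℝ :=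
    Sum.elim (fun _ => σbar ^ 2) (Sum.elim (fun _ => σ ^ 2)
      (Sum.elim (fun _ => σbar ^ 2) (fun _ => σ ^ 2))) with hVdef
  set c : (Fin T ⊕ ((Fin T × Fin N) ⊕ (Unit ⊕ Fin k))) → ℝ :=
    Sum.elim (fun _ => 1 / (T:ℝ)) (Sum.elim (fun _ => 1 / ((T:ℝ) * (N:ℝ)))
      (Sum.elim (fun _ => (1:ℝ)) (fun _ => 1 / (k:ℝ)))) with hcdef
  have hFmem : ∀ i, MemLp (F i) 2 ℙ := by
    rintro (i | (p | (u | j)))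
    · exact OutAux.rv_memLp (hμmeas i) hvb (hμlaw i)
    · exact OutAux.rv_memLp (hεmeas p.1 p.2) hve (hεlaw p.1 p.2)
    · exact OutAux.rv_memLp hμ'meas hvb hμ'law
    · exact OutAux.rv_memLp (hε'meas j) hve (hε'law j)
  have hFint : ∀ i, ∫ ω, F i ω ∂ℙ = M i := by
    rintro (i | (p | (u | j)))
    · exact OutAux.rv_integral (hμmeas i) hvb (hμlaw i)
    · exact OutAux.rv_integral (hεmeas p.1 p.2) hve (hεlaw p.1 p.2)
    · exact OutAux.rv_integral hμ'meas hvb hμ'law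
    · exact OutAux.rv_integral (hε'meas j) hve (hε'law j)
  have hFvar : ∀ i, variance (F i) ℙ = V i := by
    rintro (i | (p | (u | j)))
    · exact (OutAux.rv_variance (hμmeas i) hvb (hμlaw i)).trans hvbcoe
    · exact (OutAux.rv_variance (hεmeas p.1 p.2) hve (hεlaw p.1 p.2)).trans hvecoe
    · exact (OutAux.rv_variance hμ'meas hvb hμ'law).trans hvbcoe
    · exact (OutAux.rv_variance (hε'meas j) hve (hε'law j)).trans hvecoe
  -- the scaled family
  set Z : (Fin T ⊕ ((Fin T × Fin N) ⊕ (Unit ⊕ Fin k))) → Ω → ℝ :=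
    fun i ω => c i * F i ω with hZdef
  have hZmeas : ∀ i, Measurable (Z i) := fun i => (hFmeas i).const_mul (c i)
  have hZmem : ∀ i, MemLp (Z i) 2 ℙ := fun i => (hFmem i).const_mul (c i)
  have hZint : ∀ i, Integrable (Z i) ℙ := fun i => (hZmem i).integrable one_le_two
  have hZmean : ∀ i, ∫ ω, Z i ω ∂ℙ = c i * M i := by
    intro i
    rw [hZdef]
    rw [integral_const_mul, hFint i]
  have hZvar : ∀ i, variance (Z i) ℙ = c i ^ 2 * V i := by
    intro i
    rw [hZdef, variance_const_mul, hFvar i]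
  have hZind : ∀ i j, i ≠ j → IndepFun (Z i) (Z j) ℙ := fun i j hij =>
    (hindep.indepFun hij).comp (measurable_id.const_mul (c i)) (measurable_id.const_mul (c j))
  -- index finsets
  set Sa : Finset (Fin T ⊕ ((Fin T × Fin N) ⊕ (Unit ⊕ Fin k))) :=
    Finset.univ.image Sum.inl with hSadef
  set Sb : Finset (Fin T ⊕ ((Fin T × Fin N) ⊕ (Unit ⊕ Fin k))) :=
    Finset.univ.image (fun p : Fin T × Fin N => Sum.inr (Sum.inl p)) with hSbdef
  set S₂ : Finset (Fin T ⊕ ((Fin T × Fin N) ⊕ (Unit ⊕ Fin k))) :=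
    Finset.univ.image (fun u : Unit ⊕ Fin k => Sum.inr (Sum.inr u)) with hS2def
  have hdisjab : Disjoint Sa Sb := by
    rw [Finset.disjoint_left]
    rintro a ha hb
    simp only [hSadef, hSbdef, Finset.mem_image, Finset.mem_univ, true_and] at ha hb
    obtain ⟨i, rfl⟩ := ha
    obtain ⟨p, hp⟩ := hb
    exact absurd hp (by simp)
  have hdisjaS2 : Disjoint Sa S₂ := by
    rw [Finset.disjoint_left]
    rintro a ha hb
    simp only [hSadef, hS2def, Finset.mem_image, Finset.mem_univ, true_and] at ha hb
    obtain ⟨i, rfl⟩ := ha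
    obtain ⟨p, hp⟩ := hb
    exact absurd hp (by simp)
  have hdisjbS2 : Disjoint Sb S₂ := by
    rw [Finset.disjoint_left]
    rintro a ha hb
    simp only [hSbdef, hS2def, Finset.mem_image, Finset.mem_univ, true_and] at ha hb
    obtain ⟨i, rfl⟩ := ha
    obtain ⟨p, hp⟩ := hb
    exact absurd hp (by simp)
  set S₁ : Finset (Fin T ⊕ ((Fin T × Fin N) ⊕ (Unit ⊕ Fin k))) := Sa ∪ Sb with hS1def
  have hdisj : Disjoint S₁ S₂ := by
    rw [hS1def, Finset.disjoint_union_left]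
    exact ⟨hdisjaS2, hdisjbS2⟩
  -- generic sum evaluation over S₁ and S₂
  have hsumS₁ : ∀ (φ : (Fin T ⊕ ((Fin T × Fin N) ⊕ (Unit ⊕ Fin k))) → ℝ),
      ∑ i ∈ S₁, φ i = ∑ i : Fin T, φ (Sum.inl i)
        + ∑ p : Fin T × Fin N, φ (Sum.inr (Sum.inl p)) := by
    intro φ
    rw [hS1def, Finset.sum_union hdisjab, hSadef, hSbdef,
      Finset.sum_image Sum.inl_injective.injOn,
      Finset.sum_image (fun a _ b _ h => by simpa using h)]
  have hsumS₂ : ∀ (φ : (Fin T ⊕ ((Fin T × Fin N) ⊕ (Unit ⊕ Fin k))) → ℝ),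
      ∑ i ∈ S₂, φ i = φ (Sum.inr (Sum.inr (Sum.inl ())))
        + ∑ j : Fin k, φ (Sum.inr (Sum.inr (Sum.inr j))) := by
    intro φ
    rw [hS2def, Finset.sum_image (fun a _ b _ h => by simpa using h), Fintype.sum_sum_type]
    simp
  -- the two centered factors
  set SA : Ω → ℝ := fun ω => ∑ i ∈ S₁, Z i ω with hSAdef
  set SB : Ω → ℝ := fun ω => ∑ i ∈ S₂, Z i ω with hSBdef
  -- identification of the target function
  have hfun : (fun ω =>
        ((1 / (T : ℝ)) * ∑ i : Fin T, (1 / (N : ℝ)) * ∑ j : Fin N, (μ i ω + ε i j ω) - μbar)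
          * ((1 / (k : ℝ)) * ∑ j : Fin k, (μ' ω + ε' j ω) - μbar))
      = fun ω => (SA ω - μbar) * (SB ω - μbar) := by
    funext ω
    have hA : (1 / (T : ℝ)) * ∑ i : Fin T, (1 / (N : ℝ)) * ∑ j : Fin N, (μ i ω + ε i j ω)
        = SA ω := by
      rw [show SA ω = ∑ i ∈ S₁, Z i ω from rfl, hsumS₁ (fun i => Z i ω)]
      simp only [hZdef, hcdef, hFdef, Sum.elim_inl, Sum.elim_inr]
      rw [Fintype.sum_prod_type, ← Finset.sum_add_distrib, Finset.mul_sum]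
      refine Finset.sum_congr rfl (fun i _ => ?_)
      rw [Finset.sum_add_distrib, Finset.sum_const, Finset.card_univ, Fintype.card_fin,
        nsmul_eq_mul, ← Finset.mul_sum]
      field_simp
    have hB : (1 / (k : ℝ)) * ∑ j : Fin k, (μ' ω + ε' j ω) = SB ω := by
      rw [show SB ω = ∑ i ∈ S₂, Z i ω from rfl, hsumS₂ (fun i => Z i ω)]
      simp only [hZdef, hcdef, hFdef, Sum.elim_inl, Sum.elim_inr]
      rw [Finset.sum_add_distrib, Finset.sum_const, Finset.card_univ, Fintype.card_fin,
        nsmul_eq_mul, ← Finset.mul_sum]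
      field_simp
    rw [hA, hB]
  rw [hfun]
  -- independence of the two factors
  have htuple := hindep.indepFun_finset S₁ S₂ hdisj hFmeas
  have hAB : IndepFun (fun ω => SA ω - μbar) (fun ω => SB ω - μbar) ℙ := by
    have hg₁ : Measurable (fun x : ((i : S₁) → ℝ) => (∑ i : S₁, c i.1 * x i) - μbar) :=
      (Finset.measurable_sum Finset.univ
        (fun i _ => by fun_prop)).sub measurable_const
    have hg₂ : Measurable (fun x : ((i : S₂) → ℝ) => (∑ i : S₂, c i.1 * x i) - μbar) :=
      (Finset.measurable_sum Finset.univ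
        (fun i _ => by fun_prop)).sub measurable_const
    have h := htuple.comp hg₁ hg₂
    have e₁ : (fun x : ((i : S₁) → ℝ) => (∑ i : S₁, c i.1 * x i) - μbar)
        ∘ (fun a (i : S₁) => F i.1 a) = fun ω => SA ω - μbar := by
      funext ω
      simp only [Function.comp_apply, hSAdef]
      congr 1
      rw [← Finset.sum_coe_sort S₁ (fun i => Z i ω)]
    have e₂ : (fun x : ((i : S₂) → ℝ) => (∑ i : S₂, c i.1 * x i) - μbar)
        ∘ (fun a (i : S₂) => F i.1 a) = fun ω => SB ω - μbar := by
      funext ω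
      simp only [Function.comp_apply, hSBdef]
      congr 1
      rw [← Finset.sum_coe_sort S₂ (fun i => Z i ω)]
    rwa [e₁, e₂] at h
  -- MemLp, means, variances of the factors
  have hSAmem : MemLp SA 2 ℙ := memLp_finsetSum S₁ (fun i _ => hZmem i)
  have hSBmem : MemLp SB 2 ℙ := memLp_finsetSum S₂ (fun i _ => hZmem i)
  have hAmem : MemLp (fun ω => SA ω - μbar) 2 ℙ := hSAmem.sub (memLp_const μbar)
  have hBmem : MemLp (fun ω => SB ω - μbar) 2 ℙ := hSBmem.sub (memLp_const μbar)
  have hSAint : ∫ ω, SA ω ∂ℙ = μbar := by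
    rw [hSAdef]
    rw [integral_finset_sum S₁ (fun i _ => hZint i),
      Finset.sum_congr rfl (fun i _ => hZmean i), hsumS₁ (fun i => c i * M i)]
    simp only [hcdef, hMdef, Sum.elim_inl, Sum.elim_inr, mul_zero, Finset.sum_const_zero,
      add_zero, Finset.sum_const, Finset.card_univ, Fintype.card_fin, nsmul_eq_mul]
    field_simp
  have hSBint : ∫ ω, SB ω ∂ℙ = μbar := by
    rw [hSBdef]
    rw [integral_finset_sum S₂ (fun i _ => hZint i),
      Finset.sum_congr rfl (fun i _ => hZmean i), hsumS₂ (fun i => c i * M i)]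
    simp only [hcdef, hMdef, Sum.elim_inl, Sum.elim_inr, mul_zero, Finset.sum_const_zero,
      add_zero, one_mul]
  set vA : ℝ := σbar ^ 2 / T + σ ^ 2 / (T * N) with hvAdef
  set vB : ℝ := σbar ^ 2 + σ ^ 2 / k with hvBdef
  have hSAvar : variance SA ℙ = vA := by
    have hsum : SA = ∑ i ∈ S₁, Z i := by
      funext ω
      rw [Finset.sum_apply]
    rw [hsum, IndepFun.variance_sum (fun i _ => hZmem i)
      (fun i _ j _ hij => hZind i j hij),
      Finset.sum_congr rfl (fun i _ => hZvar i), hsumS₁ (fun i => c i ^ 2 * V i)]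
    simp only [hcdef, hVdef, Sum.elim_inl, Sum.elim_inr, Finset.sum_const, Finset.card_univ,
      Fintype.card_fin, Fintype.card_prod, nsmul_eq_mul, hvAdef]
    push_cast
    field_simp
  have hSBvar : variance SB ℙ = vB := by
    have hsum : SB = ∑ i ∈ S₂, Z i := by
      funext ω
      rw [Finset.sum_apply]
    rw [hsum, IndepFun.variance_sum (fun i _ => hZmem i)
      (fun i _ j _ hij => hZind i j hij),
      Finset.sum_congr rfl (fun i _ => hZvar i), hsumS₂ (fun i => c i ^ 2 * V i)]
    simp only [hcdef, hVdef, Sum.elim_inl, Sum.elim_inr, Finset.sum_const, Finset.card_univ,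
      Fintype.card_fin, nsmul_eq_mul, hvBdef, one_pow, one_mul]
    field_simp
  have hAvar : variance (fun ω => SA ω - μbar) ℙ = vA :=
    (OutAux.variance_fun_sub_const hSAmem μbar).trans hSAvar
  have hBvar : variance (fun ω => SB ω - μbar) ℙ = vB :=
    (OutAux.variance_fun_sub_const hSBmem μbar).trans hSBvar
  have hEA : ∫ ω, (SA ω - μbar) ∂ℙ = 0 := by
    rw [integral_sub (hSAmem.integrable one_le_two) (integrable_const _), hSAint,
      integral_const]
    simp
  have hEB : ∫ ω, (SB ω - μbar) ∂ℙ = 0 := by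
    rw [integral_sub (hSBmem.integrable one_le_two) (integrable_const _), hSBint,
      integral_const]
    simp
  have hA2 : ∫ ω, (SA ω - μbar) ^ 2 ∂ℙ = vA := by
    have h := variance_eq_sub hAmem
    simp only [Pi.pow_apply] at h
    rw [hAvar, hEA] at h
    linarith
  have hB2 : ∫ ω, (SB ω - μbar) ^ 2 ∂ℙ = vB := by
    have h := variance_eq_sub hBmem
    simp only [Pi.pow_apply] at h
    rw [hBvar, hEB] at h
    linarith
  have hAmeas : Measurable (fun ω => SA ω - μbar) :=
    (Finset.measurable_sum S₁ (fun i _ => hZmeas i)).sub measurable_const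
  have hBmeas : Measurable (fun ω => SB ω - μbar) :=
    (Finset.measurable_sum S₂ (fun i _ => hZmeas i)).sub measurable_const
  have hsqind : IndepFun (fun ω => (SA ω - μbar) ^ 2) (fun ω => (SB ω - μbar) ^ 2) ℙ :=
    hAB.comp (measurable_id.pow_const 2) (measurable_id.pow_const 2)
  have hA2i : Integrable (fun ω => (SA ω - μbar) ^ 2) ℙ := hAmem.integrable_sq
  have hB2i : Integrable (fun ω => (SB ω - μbar) ^ 2) ℙ := hBmem.integrable_sq
  have hABmem : MemLp (fun ω => (SA ω - μbar) * (SB ω - μbar)) 2 ℙ := by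
    have hm : AEStronglyMeasurable (fun ω => (SA ω - μbar) * (SB ω - μbar)) ℙ :=
      (hAmeas.mul hBmeas).aestronglyMeasurable
    rw [memLp_two_iff_integrable_sq hm]
    have hint := hsqind.integrable_mul hA2i hB2i
    apply hint.congr
    filter_upwards with ω
    simp only [Pi.mul_apply]
    ring
  have hEAB : ∫ ω, (SA ω - μbar) * (SB ω - μbar) ∂ℙ = 0 := by
    have h := hAB.integral_mul_eq_mul_integral hAmeas.aestronglyMeasurable hBmeas.aestronglyMeasurable
    have h' : (∫ ω, (SA ω - μbar) * (SB ω - μbar) ∂ℙ)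
        = (∫ ω, (SA ω - μbar) ∂ℙ) * ∫ ω, (SB ω - μbar) ∂ℙ := h
    rw [h', hEA, hEB]
    ring
  have hEAB2 : ∫ ω, ((SA ω - μbar) * (SB ω - μbar)) ^ 2 ∂ℙ = vA * vB := by
    have h := hsqind.integral_mul_eq_mul_integral hA2i.aestronglyMeasurable hB2i.aestronglyMeasurable
    have h' : (∫ ω, (SA ω - μbar) ^ 2 * (SB ω - μbar) ^ 2 ∂ℙ)
        = (∫ ω, (SA ω - μbar) ^ 2 ∂ℙ) * ∫ ω, (SB ω - μbar) ^ 2 ∂ℙ := h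
    have e : (∫ ω, ((SA ω - μbar) * (SB ω - μbar)) ^ 2 ∂ℙ)
        = ∫ ω, (SA ω - μbar) ^ 2 * (SB ω - μbar) ^ 2 ∂ℙ := by
      congr 1
      funext ω
      ring
    rw [e, h', hA2, hB2]
  rw [variance_eq_sub hABmem]
  simp only [Pi.pow_apply]
  rw [hEAB2, hEAB, hvAdef, hvBdef]
  field_simp
  ring
end
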